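/- arXiv:1503.01223 — 6 statements merged into one kernel-verified Lean document; each statement's English description precedes it below -/
import Mathlib

section
/- For W = x^3 + y^3 + y z^2, the maximal diagonal symmetry group G_max is generated by (e^{2 pi i/3}, 1, 1) and (1, e^{2 pi i/3}, e^{2 pi i * 5/6}), and has order 18. -/
open MvPolynomial

noncomputable def myω : ℂ := Complex.exp (2 * (Real.pi : ℂ) * Complex.I / 3)
noncomputable def myζ : ℂ := Complex.exp (2 * (Real.pi : ℂ) * Complex.I * (5 / 6))

theorem hωprim : IsPrimitiveRoot myω 3 := Complex.isPrimitiveRoot_exp 3 (by norm_num)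

theorem hζprim : IsPrimitiveRoot myζ 6 := by
  have h := (Complex.isPrimitiveRoot_exp 6 (by norm_num)).pow_of_coprime 5 (by norm_num)
  have e : myζ = Complex.exp (2 * (Real.pi : ℂ) * Complex.I / 6) ^ 5 := by
    rw [← Complex.exp_nat_mul, myζ]
    norm_num
    ring_nf
  rwa [e]

theorem hω3 : myω ^ 3 = 1 := hωprim.pow_eq_one
theorem hζ6 : myζ ^ 6 = 1 := hζprim.pow_eq_one

theorem hωζ : myω * myζ ^ 2 = 1 := by
  rw [myω, myζ, ← Complex.exp_nat_mul, ← Complex.exp_add,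
    show 2 * (Real.pi : ℂ) * Complex.I / 3 + ((2:ℕ):ℂ) * (2 * (Real.pi : ℂ) * Complex.I * (5 / 6))
      = (2 : ℤ) * (2 * Real.pi * Complex.I) from by push_cast; ring,
    Complex.exp_int_mul_two_pi_mul_I]

noncomputable def ωu : ℂˣ := Units.mk0 myω (by unfold myω; exact Complex.exp_ne_zero _)
noncomputable def ζu : ℂˣ := Units.mk0 myζ (by unfold myζ; exact Complex.exp_ne_zero _)

noncomputable def gg₁ : Fin 3 → ℂˣ := ![ωu, 1, 1]
noncomputable def gg₂ : Fin 3 → ℂˣ := ![1, ωu, ζu]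

theorem coords (a b : ℕ) :
    ((gg₁ ^ a * gg₂ ^ b) 0 : ℂ) = myω ^ a ∧ ((gg₁ ^ a * gg₂ ^ b) 1 : ℂ) = myω ^ b ∧
      ((gg₁ ^ a * gg₂ ^ b) 2 : ℂ) = myζ ^ b := by
  refine ⟨?_, ?_, ?_⟩ <;>
    simp [gg₁, gg₂, ωu, ζu, Pi.mul_apply, Pi.pow_apply, Units.val_mul,
      Units.val_pow_eq_pow_val]

/-- The condition set as a subgroup. -/
noncomputable def Hgrp : Subgroup (Fin 3 → ℂˣ) where
  carrier := {β | (β 0 : ℂ) ^ 3 = 1 ∧ (β 1 : ℂ) ^ 3 = 1 ∧ (β 1 : ℂ) * (β 2 : ℂ) ^ 2 = 1}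
  one_mem' := by simp
  mul_mem' := by
    rintro a b ⟨a0, a1, a2⟩ ⟨b0, b1, b2⟩
    refine ⟨?_, ?_, ?_⟩ <;> simp only [Pi.mul_apply, Units.val_mul]
    · rw [mul_pow, a0, b0, one_mul]
    · rw [mul_pow, a1, b1, one_mul]
    · linear_combination ((b 1 : ℂ) * (b 2 : ℂ) ^ 2) * a2 + b2
  inv_mem' := by
    rintro a ⟨a0, a1, a2⟩
    refine ⟨?_, ?_, ?_⟩ <;> simp only [Pi.inv_apply, Units.val_inv_eq_inv_val]
    · rw [inv_pow, a0, inv_one]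
    · rw [inv_pow, a1, inv_one]
    · rw [inv_pow, ← mul_inv, a2, inv_one]

theorem mem_Hgrp_pow (a b : ℕ) : gg₁ ^ a * gg₂ ^ b ∈ Hgrp := by
  obtain ⟨c0, c1, c2⟩ := coords a b
  refine ⟨?_, ?_, ?_⟩
  · rw [c0, ← pow_mul, mul_comm, pow_mul, hω3, one_pow]
  · rw [c1, ← pow_mul, mul_comm, pow_mul, hω3, one_pow]
  · rw [c1, c2, ← pow_mul, pow_mul', ← mul_pow, hωζ, one_pow]

theorem decomp (β : Fin 3 → ℂˣ) (hβ : β ∈ Hgrp) :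
    ∃ a < 3, ∃ b < 6, β = gg₁ ^ a * gg₂ ^ b := by
  obtain ⟨h0, h1, h2⟩ := hβ
  obtain ⟨a, ha3, hωa⟩ := hωprim.eq_pow_of_pow_eq_one h0
  have h6 : (β 2 : ℂ) ^ 6 = 1 := by
    linear_combination (((β 1 : ℂ) * (β 2 : ℂ) ^ 2) ^ 2 + (β 1 : ℂ) * (β 2 : ℂ) ^ 2 + 1) * h2
      - (β 2 : ℂ) ^ 6 * h1
  obtain ⟨b, hb6, hζb⟩ := hζprim.eq_pow_of_pow_eq_one h6
  obtain ⟨c0, c1, c2⟩ := coords a b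
  refine ⟨a, ha3, b, hb6, ?_⟩
  have hβ1 : (β 1 : ℂ) = myω ^ b := by
    have hz : myζ ^ (2 * b) ≠ 0 := pow_ne_zero _ (by unfold myζ; exact Complex.exp_ne_zero _)
    apply mul_right_cancel₀ hz
    have e1 : (β 1 : ℂ) * myζ ^ (2 * b) = 1 := by
      rw [pow_mul', hζb]; exact h2
    have e2 : myω ^ b * myζ ^ (2 * b) = 1 := by
      rw [mul_comm 2 b, pow_mul', ← mul_pow, hωζ, one_pow]
    rw [e1, e2]
  funext i
  fin_cases i <;> apply Units.ext
  · exact (c0.trans hωa).symm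
  · exact (c1.trans hβ1.symm).symm
  · exact (c2.trans hζb).symm

/-- For `W = x³ + y³ + yz²`, the maximal diagonal symmetry group
`G_max = {β ∈ (ℂ*)³ : W(β₁x, β₂y, β₃z) = W}` is generated by
`(e^{2πi/3}, 1, 1)` and `(1, e^{2πi/3}, e^{2πi·5/6})`, and has order 18. -/
theorem Gmax_of_x3_y3_yz2
    (W : MvPolynomial (Fin 3) ℂ) (hW : W = X 0 ^ 3 + X 1 ^ 3 + X 1 * X 2 ^ 2)
    (Gmax : Set (Fin 3 → ℂˣ))
    (hG : Gmax = {β | MvPolynomial.aeval (fun i => MvPolynomial.C ((β i : ℂ)) * X i) W = W}) :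
    ∃ g₁ g₂ : Fin 3 → ℂˣ,
      ((g₁ 0 : ℂ) = Complex.exp (2 * (Real.pi : ℂ) * Complex.I / 3) ∧
        (g₁ 1 : ℂ) = 1 ∧ (g₁ 2 : ℂ) = 1) ∧
      ((g₂ 0 : ℂ) = 1 ∧
        (g₂ 1 : ℂ) = Complex.exp (2 * (Real.pi : ℂ) * Complex.I / 3) ∧
        (g₂ 2 : ℂ) = Complex.exp (2 * (Real.pi : ℂ) * Complex.I * (5 / 6))) ∧
      Gmax = (Subgroup.closure {g₁, g₂} : Subgroup (Fin 3 → ℂˣ)) ∧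
      Gmax.ncard = 18 := by
  subst hW hG
  -- key : the defining set equals Hgrp
  have key : {β : Fin 3 → ℂˣ |
      MvPolynomial.aeval (fun i => MvPolynomial.C ((β i : ℂ)) * X i)
        ((X 0 ^ 3 + X 1 ^ 3 + X 1 * X 2 ^ 2 : MvPolynomial (Fin 3) ℂ))
        = X 0 ^ 3 + X 1 ^ 3 + X 1 * X 2 ^ 2} = (Hgrp : Set (Fin 3 → ℂˣ)) := by
    ext β
    simp only [Set.mem_setOf_eq, SetLike.mem_coe]
    constructor
    · intro h
      have h0 := congrArg (eval fun i => if i = 0 then (1:ℂ) else 0) h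
      have h1 := congrArg (eval fun i => if i = 1 then (1:ℂ) else 0) h
      have h2 := congrArg (eval fun i : Fin 3 => if i = 0 then (0:ℂ) else 1) h
      simp at h0 h1 h2
      refine ⟨h0, h1, ?_⟩
      rw [h1] at h2
      linear_combination h2
    · rintro ⟨h0, h1, h2⟩
      have e : ∀ i : Fin 3, ∀ n : ℕ,
          (MvPolynomial.C ((β i : ℂ)) * X i) ^ n
            = MvPolynomial.C ((β i : ℂ) ^ n) * X i ^ n := by
        intro i n; rw [mul_pow, ← C_pow]
      simp only [map_add, map_mul, map_pow, aeval_X, e, h0, h1, map_one, one_mul]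
      congr 1
      rw [mul_mul_mul_comm, ← C_pow, ← C_mul, h2, map_one, one_mul]
  have hg1 : gg₁ ∈ Hgrp := by
    have e : gg₁ = gg₁ ^ 1 * gg₂ ^ 0 := by rw [pow_one, pow_zero, mul_one]
    rw [e]; exact mem_Hgrp_pow 1 0
  have hg2 : gg₂ ∈ Hgrp := by
    have e : gg₂ = gg₁ ^ 0 * gg₂ ^ 1 := by rw [pow_one, pow_zero, one_mul]
    rw [e]; exact mem_Hgrp_pow 0 1
  have hcl : Hgrp = Subgroup.closure {gg₁, gg₂} := by
    apply le_antisymm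
    · intro β hβ
      obtain ⟨a, _, b, _, rfl⟩ := decomp β hβ
      exact mul_mem (pow_mem (Subgroup.subset_closure (by simp)) a)
        (pow_mem (Subgroup.subset_closure (by simp)) b)
    · rw [Subgroup.closure_le]
      rintro x hx
      rcases hx with rfl | rfl
      · exact hg1
      · exact hg2
  refine ⟨gg₁, gg₂, ⟨rfl, rfl, rfl⟩, ⟨rfl, rfl, rfl⟩, ?_, ?_⟩
  · rw [key, hcl]
  · have img : (Hgrp : Set (Fin 3 → ℂˣ)) =
        (fun p : ℕ × ℕ => gg₁ ^ p.1 * gg₂ ^ p.2) '' ↑(Finset.range 3 ×ˢ Finset.range 6) := by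
      ext β
      simp only [SetLike.mem_coe, Set.mem_image, Finset.mem_coe, Finset.mem_product,
        Finset.mem_range, Prod.exists]
      constructor
      · intro hβ
        obtain ⟨a, ha, b, hb, rfl⟩ := decomp β hβ
        exact ⟨a, b, ⟨ha, hb⟩, rfl⟩
      · rintro ⟨a, b, _, rfl⟩
        exact mem_Hgrp_pow a b
    have hinj : Set.InjOn (fun p : ℕ × ℕ => gg₁ ^ p.1 * gg₂ ^ p.2)
        ↑(Finset.range 3 ×ˢ Finset.range 6) := by
      rintro ⟨a, b⟩ hp ⟨c, d⟩ hq h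
      simp only [Finset.mem_coe, Finset.mem_product, Finset.mem_range] at hp hq
      have e2 : myζ ^ b = myζ ^ d := by
        have := congrArg (fun f : Fin 3 → ℂˣ => ((f 2 : ℂˣ) : ℂ)) h
        simpa only [(coords a b).2.2, (coords c d).2.2] using this
      have e0 : myω ^ a = myω ^ c := by
        have := congrArg (fun f : Fin 3 → ℂˣ => ((f 0 : ℂˣ) : ℂ)) h
        simpa only [(coords a b).1, (coords c d).1] using this
      exact Prod.ext (hωprim.pow_inj hp.1 hq.1 e0) (hζprim.pow_inj hp.2 hq.2 e2)
    rw [key, img, Set.ncard_image_of_injOn hinj, Set.ncard_coe_finset,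
      Finset.card_product, Finset.card_range, Finset.card_range]
end

section
/- The loop polynomial W = x_1^{a_1} x_2 + x_2^{a_2} x_3 + ... + x_N^{a_N} x_1 with all a_k >= 2 is quasihomogeneous, and its weights q_i satisfy the linear system a_i q_i + q_{i+1 mod N} = 1; this system has a unique solution with all q_i in (0, 1/2). -/
open MvPolynomial Finset

/-- `W` is quasihomogeneous with weights `q`. -/
def IsQuasihomogeneous {N : ℕ} (W : MvPolynomial (Fin N) ℂ) (q : Fin N → ℚ) : Prop :=
  ∀ a ∈ W.support, ∑ j, q j * (a j : ℚ) = 1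

/-- The loop polynomial `∑ x_i^{a_i} x_{i+1 mod N}` with all `a_k ≥ 2` is quasihomogeneous;
its weights satisfy `a_i q_i + q_{i+1 mod N} = 1`, and this linear system has a unique
solution, with all `q_i ∈ (0, 1/2)`. -/
theorem loop_polynomial_weights {N : ℕ} (hN : 0 < N) (a : Fin N → ℕ) (ha : ∀ i, 2 ≤ a i)
    (W : MvPolynomial (Fin N) ℂ)
    (hW : W = ∑ i : Fin N, X i ^ a i * X ⟨(i.val + 1) % N, Nat.mod_lt _ hN⟩) :
    ∃ q : Fin N → ℚ,
      IsQuasihomogeneous W q ∧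
      (∀ i : Fin N, (a i : ℚ) * q i + q ⟨(i.val + 1) % N, Nat.mod_lt _ hN⟩ = 1) ∧
      (∀ i, 0 < q i ∧ q i < 1 / 2) ∧
      (∀ q' : Fin N → ℚ,
        (∀ i : Fin N, (a i : ℚ) * q' i + q' ⟨(i.val + 1) % N, Nat.mod_lt _ hN⟩ = 1) →
        q' = q) := by
  haveI : NeZero N := ⟨hN.ne'⟩
  set succ : Fin N → Fin N := fun i => ⟨(i.val + 1) % N, Nat.mod_lt _ hN⟩ with hsucc
  have hauniv : ∀ i, (2:ℚ) ≤ (a i : ℚ) := fun i => by exact_mod_cast ha i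
  let L : (Fin N → ℚ) →ₗ[ℚ] (Fin N → ℚ) :=
    { toFun := fun q i => (a i : ℚ) * q i + q (succ i)
      map_add' := by intro x y; funext i; simp [Pi.add_apply]; ring
      map_smul' := by intro c x; funext i; simp [Pi.smul_apply, smul_eq_mul]; ring }
  have hinj : Function.Injective L := by
    rw [injective_iff_map_eq_zero]
    intro q hq0
    have h0 : ∀ i, (a i : ℚ) * q i + q (succ i) = 0 := fun i => congrFun hq0 i
    obtain ⟨i0, -, hmax⟩ := Finset.exists_max_image Finset.univ (fun i => |q i|) univ_nonempty
    have h1 : |q (succ i0)| = (a i0 : ℚ) * |q i0| := by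
      have : q (succ i0) = -((a i0 : ℚ) * q i0) := by linarith [h0 i0]
      rw [this, abs_neg, abs_mul, abs_of_nonneg (by positivity : (0:ℚ) ≤ (a i0 : ℚ))]
    have h2 : |q i0| ≤ 0 := by
      have := hmax (succ i0) (mem_univ _)
      nlinarith [hauniv i0, abs_nonneg (q i0)]
    funext i
    have := hmax i (mem_univ _)
    have : |q i| ≤ 0 := le_trans this h2
    simpa using abs_nonpos_iff.mp this
  obtain ⟨q, hqL⟩ := (LinearMap.injective_iff_surjective.mp hinj) (fun _ => (1:ℚ))
  have hq : ∀ i, (a i : ℚ) * q i + q (succ i) = 1 := fun i => congrFun hqL i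
  obtain ⟨imax, -, hmax⟩ := Finset.exists_max_image Finset.univ q univ_nonempty
  obtain ⟨imin, -, hmin⟩ := Finset.exists_min_image Finset.univ q univ_nonempty
  have hM : q imax < 1/2 := by
    by_contra h
    push_neg at h
    have e1 : q (succ imax) = 1 - (a imax : ℚ) * q imax := by linarith [hq imax]
    have e2 : q imin ≤ 1 - 2 * q imax := by
      have := hmin (succ imax) (mem_univ _)
      nlinarith [hauniv imax]
    have e3 : q (succ imin) = 1 - (a imin : ℚ) * q imin := by linarith [hq imin]
    have e4 : q imin ≤ 0 := by linarith
    have e5 : q (succ imin) ≤ q imax := hmax _ (mem_univ _)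
    nlinarith [hauniv imin]
  have hm : 0 < q imin := by
    by_contra h
    push_neg at h
    have e3 : q (succ imin) = 1 - (a imin : ℚ) * q imin := by linarith [hq imin]
    have e5 : q (succ imin) ≤ q imax := hmax _ (mem_univ _)
    nlinarith [hauniv imin]
  refine ⟨q, ?_, hq, fun i => ⟨lt_of_lt_of_le hm (hmin i (mem_univ _)),
      lt_of_le_of_lt (hmax i (mem_univ _)) hM⟩, ?_⟩
  · -- quasihomogeneous
    intro d hd
    have hWmono : W = ∑ i : Fin N,
        monomial (Finsupp.single i (a i) + Finsupp.single (succ i) 1) (1:ℂ) := by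
      rw [hW]
      refine Finset.sum_congr rfl fun i _ => ?_
      rw [X_pow_eq_monomial, X, monomial_mul, one_mul]
    rw [hWmono] at hd
    have hd' := MvPolynomial.support_sum hd
    rw [Finset.mem_biUnion] at hd'
    obtain ⟨i, -, hi⟩ := hd'
    rw [support_monomial] at hi
    simp only [one_ne_zero, if_false, Finset.mem_singleton] at hi
    subst hi
    simp only [Finsupp.add_apply, Finsupp.single_apply, Nat.cast_add, Nat.cast_ite,
      Nat.cast_zero, Nat.cast_one, mul_add, Finset.sum_add_distrib, mul_ite, mul_zero,
      Finset.sum_ite_eq, Finset.mem_univ, if_true]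
    linear_combination hq i
  · intro q' hq'
    apply hinj
    funext i
    show (a i : ℚ) * q' i + q' (succ i) = (a i : ℚ) * q i + q (succ i)
    rw [hq' i, hq i]
end

section
/- Let W be an invertible polynomial with invertible exponent matrix E and let G be a subgroup of G_max,W. Then G^T is a subgroup of G_max,W^T, i.e. every h in G^T satisfies E^T h in Z^N. -/
open Matrix Finset

/-- A rational vector is integral. -/
def IsIntVec {N : ℕ} (v : Fin N → ℚ) : Prop := ∀ i, ∃ m : ℤ, v i = (m : ℚ)

/-- The lattice `ℤ^N ⊆ ℚ^N`; in the additive presentation of symmetry groups inside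
`(ℚ/ℤ)^N`, a subgroup corresponds to a subgroup of `ℚ^N` containing `intLattice N`,
and `intLattice N` itself represents the trivial group `{0}`. -/
def intLattice (N : ℕ) : AddSubgroup (Fin N → ℚ) where
  carrier := {v | IsIntVec v}
  zero_mem' := fun i => ⟨0, by simp⟩
  add_mem' := by
    rintro v w hv hw i
    obtain ⟨m, hm⟩ := hv i
    obtain ⟨n, hn⟩ := hw i
    exact ⟨m + n, by simp [hm, hn]⟩
  neg_mem' := by
    rintro v hv i
    obtain ⟨m, hm⟩ := hv i
    exact ⟨-m, by simp [hm]⟩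

/-- The maximal diagonal symmetry group of the invertible polynomial with exponent
matrix `E`, written additively: `G_max = {g ∈ (ℚ/ℤ)^N : E g ∈ ℤ^N}`, here presented by
its preimage in `ℚ^N`. -/
def GmaxGroup {N : ℕ} (E : Matrix (Fin N) (Fin N) ℚ) : AddSubgroup (Fin N → ℚ) where
  carrier := {v | IsIntVec (E.mulVec v)}
  zero_mem' := fun i => ⟨0, by simp [Matrix.mulVec_zero]⟩
  add_mem' := by
    rintro v w hv hw i
    obtain ⟨m, hm⟩ := hv i
    obtain ⟨n, hn⟩ := hw i
    exact ⟨m + n, by simp [Matrix.mulVec_add, hm, hn]⟩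
  neg_mem' := by
    rintro v hv i
    obtain ⟨m, hm⟩ := hv i
    exact ⟨-m, by simp [Matrix.mulVec_neg, hm]⟩

/-- The BHHK transpose group `G^T = {h : h^T E g ∈ ℤ for all g ∈ G}`, in the additive
presentation by representatives in `ℚ^N`. -/
def TransposeGroup {N : ℕ} (E : Matrix (Fin N) (Fin N) ℚ) (G : AddSubgroup (Fin N → ℚ)) :
    AddSubgroup (Fin N → ℚ) where
  carrier := {h | ∀ g ∈ G, ∃ m : ℤ, h ⬝ᵥ E.mulVec g = (m : ℚ)}
  zero_mem' := fun g _ => ⟨0, by simp⟩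
  add_mem' := by
    rintro h₁ h₂ hh₁ hh₂ g hg
    obtain ⟨m, hm⟩ := hh₁ g hg
    obtain ⟨n, hn⟩ := hh₂ g hg
    exact ⟨m + n, by simp [add_dotProduct, hm, hn]⟩
  neg_mem' := by
    rintro h hh g hg
    obtain ⟨m, hm⟩ := hh g hg
    exact ⟨-m, by simp [neg_dotProduct, hm]⟩

/-- For a subgroup `G ≤ G_max,W`, the transpose group `G^T` is a subgroup of
`G_max,W^T = {h : Eᵀ h ∈ ℤ^N}`. -/
theorem transpose_le_Gmax_of_transpose {N : ℕ} (E : Matrix (Fin N) (Fin N) ℚ)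
    (hE : E.det ≠ 0) (G : AddSubgroup (Fin N → ℚ))
    (hl : intLattice N ≤ G) (hmax : G ≤ GmaxGroup E) :
    TransposeGroup E G ≤ GmaxGroup Eᵀ := by
  intro h hh i
  have hmem : (Pi.single i 1 : Fin N → ℚ) ∈ G := by
    apply hl
    intro k
    by_cases hk : k = i
    · subst hk; exact ⟨1, by simp⟩
    · exact ⟨0, by simp [Pi.single_apply, hk]⟩
  obtain ⟨m, hm⟩ := hh _ hmem
  refine ⟨m, ?_⟩
  rw [← hm]
  simp [dotProduct, Matrix.mulVec, Pi.single_apply, Finset.mul_sum, mul_comm]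
end

section
/- Let W be an invertible polynomial with exponent matrix E, weights q_i (so E q = (1,...,1)^T), grading element J = q mod Z^N in G_max,W. For a subgroup G of G_max,W, J is an element of G if and only if G^T is contained in SL(N), i.e. every h in G^T has age(h) in Z (equivalently sum of phases of h is an integer). -/
open Matrix Finset

lemma dot_eq_coord {N : ℕ} (φ : (Fin N → ℤ) →ₗ[ℤ] ℤ) (v : Fin N → ℤ) :
    (fun k => φ fun j => if k = j then 1 else 0) ⬝ᵥ v = φ v := by
  rw [LinearMap.pi_apply_eq_sum_univ φ v]
  simp [dotProduct, mul_comm]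

lemma key_biduality {N : ℕ} (D : ℤ) (hD : D ≠ 0) (L : Submodule ℤ (Fin N → ℤ))
    (hDL : ∀ v : Fin N → ℤ, D • v ∈ L) (x : Fin N → ℤ)
    (hx : ∀ m : Fin N → ℤ, (∀ g ∈ L, D ∣ m ⬝ᵥ g) → D ∣ m ⬝ᵥ x) : x ∈ L := by
  obtain ⟨n, snf⟩ := L.smithNormalForm (Pi.basisFun ℤ (Fin N))
  have hsurj : Function.Surjective snf.f := by
    intro j
    by_contra hj
    have hj' : j ∉ Set.range snf.f := by simpa using hj
    have h2 := snf.repr_eq_zero_of_notMem_range ⟨_, hDL (snf.bM j)⟩ hj'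
    simp only [_root_.map_smul, Finsupp.smul_apply, Module.Basis.repr_self, Finsupp.single_apply,
      if_pos rfl, smul_eq_mul, mul_one] at h2
    simp at h2
    exact hD h2
  have hbij : Function.Bijective snf.f := ⟨snf.f.injective, hsurj⟩
  have hrepr : ∀ (i : Fin n) (g : Fin N → ℤ) (hg : g ∈ L),
      snf.bM.repr g (snf.f i) = snf.a i * snf.bN.repr ⟨g, hg⟩ i := by
    intro i g hg
    have := snf.repr_apply_embedding_eq_repr_smul (m := ⟨g, hg⟩) (i := i)
    rwa [_root_.map_smul, Finsupp.smul_apply, smul_eq_mul] at this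
  have hdvd : ∀ i : Fin n, snf.a i ∣ snf.bM.repr x (snf.f i) := by
    intro i
    have haD : snf.a i ∣ D := by
      have h := hrepr i (D • snf.bM (snf.f i)) (hDL _)
      rw [_root_.map_smul, Finsupp.smul_apply, Module.Basis.repr_self, Finsupp.single_apply,
        if_pos rfl, smul_eq_mul, mul_one] at h
      exact ⟨_, h⟩
    set e : ℤ := D / snf.a i with he
    have heD : e * snf.a i = D := Int.ediv_mul_cancel haD
    have he0 : e ≠ 0 := by
      intro h0
      rw [h0, zero_mul] at heD
      exact hD heD.symm
    set m : Fin N → ℤ := fun k => e * snf.bM.repr (fun j => if k = j then 1 else 0) (snf.f i)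
      with hm
    have hmv : ∀ v : Fin N → ℤ, m ⬝ᵥ v = e * snf.bM.repr v (snf.f i) := by
      intro v
      have := dot_eq_coord (e • (Finsupp.lapply (snf.f i) ∘ₗ snf.bM.repr.toLinearMap)) v
      simpa [hm, dotProduct, Finset.mul_sum, mul_assoc] using this
    have hdual : ∀ g ∈ L, D ∣ m ⬝ᵥ g := by
      intro g hg
      rw [hmv, hrepr i g hg, ← mul_assoc, heD]
      exact Dvd.intro _ rfl
    have := hx m hdual
    rw [hmv, ← heD] at this
    exact (mul_dvd_mul_iff_left he0).mp this
  have hxsum : x = ∑ i : Fin n, (snf.bM.repr x (snf.f i) / snf.a i) • (snf.bN i : Fin N → ℤ) := by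
    conv_lhs => rw [← snf.bM.sum_repr x]
    rw [← Function.Bijective.sum_comp hbij (fun j => snf.bM.repr x j • snf.bM j)]
    refine Finset.sum_congr rfl fun i _ => ?_
    rw [snf.snf i, smul_smul, Int.ediv_mul_cancel (hdvd i)]
  rw [hxsum]
  exact Submodule.sum_mem _ fun i _ => Submodule.smul_mem _ _ (snf.bN i).2

lemma cast_mulVec {N : ℕ} (M : Matrix (Fin N) (Fin N) ℤ) (w : Fin N → ℤ) :
    (M.map (Int.cast : ℤ → ℚ)) *ᵥ (fun i => (w i : ℚ)) = fun i => ((M *ᵥ w) i : ℚ) := by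
  funext i
  simp [Matrix.mulVec, dotProduct]

lemma castv_dot {N : ℕ} (m w : Fin N → ℤ) :
    ((fun i => (m i : ℚ)) ⬝ᵥ fun i => (w i : ℚ)) = ((m ⬝ᵥ w : ℤ) : ℚ) := by
  simp [dotProduct]

lemma cast_adj_mulVec {N : ℕ} (Ez : Matrix (Fin N) (Fin N) ℤ) (u : Fin N → ℤ) (g : Fin N → ℚ)
    (hu : ∀ i, (u i : ℚ) = (Ez.map (Int.cast : ℤ → ℚ)).mulVec g i) (i : Fin N) :
    ((Ez.adjugate *ᵥ u) i : ℚ) = (Ez.det : ℚ) * g i := by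
  have h1 : (fun j => (u j : ℚ)) = (Ez.map (Int.cast : ℤ → ℚ)) *ᵥ g := funext hu
  have h2 : (Ez.adjugate.map (Int.cast : ℤ → ℚ)) = (Ez.map (Int.cast : ℤ → ℚ)).adjugate := by
    have := RingHom.map_adjugate (Int.castRingHom ℚ) Ez
    simpa [RingHom.mapMatrix_apply] using this
  have h3 : ((Ez.map (Int.cast : ℤ → ℚ)).det) = (Ez.det : ℚ) := by
    have := RingHom.map_det (Int.castRingHom ℚ) Ez
    simpa [RingHom.mapMatrix_apply] using this.symm
  calc ((Ez.adjugate *ᵥ u) i : ℚ)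
      = ((Ez.adjugate.map (Int.cast : ℤ → ℚ)) *ᵥ (fun j => (u j : ℚ))) i :=
        (congrFun (cast_mulVec _ _) i).symm
    _ = (Ez.det : ℚ) * g i := by
        rw [h1, h2, Matrix.mulVec_mulVec, Matrix.adjugate_mul, h3,
          Matrix.smul_mulVec, Matrix.one_mulVec]
        rfl

def scaledGroup {N : ℕ} (G : AddSubgroup (Fin N → ℚ)) (D : ℤ) : Submodule ℤ (Fin N → ℤ) where
  carrier := {w | (fun i => (w i : ℚ) / (D : ℚ)) ∈ G}
  zero_mem' := by
    show (fun i => (((0 : Fin N → ℤ) i : ℤ) : ℚ) / (D : ℚ)) ∈ G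
    have h : (fun i => (((0 : Fin N → ℤ) i : ℤ) : ℚ) / (D : ℚ)) = (0 : Fin N → ℚ) := by
      funext i; simp
    rw [h]; exact G.zero_mem
  add_mem' := by
    intro v w hv hw
    show (fun i => (((v + w) i : ℤ) : ℚ) / (D : ℚ)) ∈ G
    have h : (fun i => (((v + w) i : ℤ) : ℚ) / (D : ℚ))
        = (fun i => (v i : ℚ) / (D : ℚ)) + fun i => (w i : ℚ) / (D : ℚ) := by
      funext i
      show ((v i + w i : ℤ) : ℚ) / (D : ℚ) = _
      simp only [Pi.add_apply]; push_cast; ring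
    rw [h]; exact G.add_mem hv hw
  smul_mem' := by
    intro c v hv
    show (fun i => (((c • v) i : ℤ) : ℚ) / (D : ℚ)) ∈ G
    have h : (fun i => (((c • v) i : ℤ) : ℚ) / (D : ℚ))
        = c • fun i => (v i : ℚ) / (D : ℚ) := by
      funext i
      show ((c * v i : ℤ) : ℚ) / (D : ℚ) = c • ((v i : ℚ) / (D : ℚ))
      push_cast [zsmul_eq_mul]; ring
    rw [h]
    exact AddSubgroup.zsmul_mem G hv c

lemma mem_scaledGroup {N : ℕ} {G : AddSubgroup (Fin N → ℚ)} {D : ℤ} {w : Fin N → ℤ} :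
    w ∈ scaledGroup G D ↔ (fun i => (w i : ℚ) / (D : ℚ)) ∈ G := Iff.rfl

/-- The grading element `J = q mod ℤ^N` (where `E q = (1,...,1)ᵀ`) lies in `G` if and
only if `G^T ⊆ SL(N)`, i.e. every `h ∈ G^T` has integral age (the sum of its phases,
the fractional parts of its entries, is an integer). -/
theorem J_mem_iff_transpose_in_SL {N : ℕ} (E : Matrix (Fin N) (Fin N) ℚ)
    (hE : E.det ≠ 0) (q : Fin N → ℚ) (hq : E.mulVec q = fun _ => 1)
    (G : AddSubgroup (Fin N → ℚ))
    (hl : intLattice N ≤ G) (hmax : G ≤ GmaxGroup E) :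
    q ∈ G ↔ ∀ h ∈ TransposeGroup E G, ∃ m : ℤ, (∑ i, Int.fract (h i)) = (m : ℚ) := by
  constructor
  · intro hqG h hh
    obtain ⟨k, hk⟩ := hh q hqG
    rw [hq] at hk
    have hsum : ∑ i, h i = (k : ℚ) := by simpa [dotProduct] using hk
    refine ⟨k - ∑ i, ⌊h i⌋, ?_⟩
    simp only [Int.fract]
    push_cast
    rw [Finset.sum_sub_distrib, hsum]
  · intro hRHS
    -- E has integer entries
    have hint : ∀ i j, ∃ m : ℤ, E i j = (m : ℚ) := by
      intro i j
      have hs : Pi.single j (1 : ℚ) ∈ intLattice N := by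
        intro k
        by_cases hk : k = j
        · exact ⟨1, by subst hk; simp⟩
        · exact ⟨0, by simp [Pi.single_apply, hk]⟩
      have h := hmax (hl hs) i
      simpa [Matrix.mulVec_single] using h
    have hint' : ∀ i, ∃ r : Fin N → ℤ, ∀ j, E i j = (r j : ℚ) := by
      intro i; choose r hr using hint i; exact ⟨r, hr⟩
    choose E' hE' using hint'
    set Ez : Matrix (Fin N) (Fin N) ℤ := Matrix.of E' with hEz
    have hEE : E = Ez.map (Int.cast : ℤ → ℚ) := by
      ext i j; exact hE' i j
    set D : ℤ := Ez.det with hDdef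
    have h3 : ((Ez.map (Int.cast : ℤ → ℚ)).det) = (D : ℚ) := by
      have := RingHom.map_det (Int.castRingHom ℚ) Ez
      simpa [RingHom.mapMatrix_apply] using this.symm
    have hDc : (D : ℚ) = E.det := by rw [hEE, h3]
    have hDQ : (D : ℚ) ≠ 0 := by rw [hDc]; exact hE
    have hD0 : D ≠ 0 := by exact_mod_cast hDQ
    -- scaling of elements of G
    have hscale : ∀ g ∈ G, ∃ w : Fin N → ℤ, ∀ i, (w i : ℚ) = (D : ℚ) * g i := by
      intro g hg
      have hEg := hmax hg
      choose u hu using hEg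
      refine ⟨Ez.adjugate *ᵥ u, fun i => ?_⟩
      exact cast_adj_mulVec Ez u g (fun j => by rw [← hEE]; exact (hu j).symm) i
    -- the scaled weight vector
    set x : Fin N → ℤ := Ez.adjugate *ᵥ (fun _ => 1) with hxdef
    have hxq : ∀ i, (x i : ℚ) = (D : ℚ) * q i := by
      intro i
      refine cast_adj_mulVec Ez (fun _ => 1) q (fun j => ?_) i
      rw [← hEE, hq]
      simp
    have hDLz : ∀ v : Fin N → ℤ, D • v ∈ scaledGroup G D := by
      intro v
      rw [mem_scaledGroup]
      have h : (fun i => (((D • v) i : ℤ) : ℚ) / (D : ℚ)) = fun i => ((v i : ℚ)) := by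
        funext i
        show ((D * v i : ℤ) : ℚ) / (D : ℚ) = _
        push_cast
        field_simp
      rw [h]
      exact hl fun i => ⟨v i, rfl⟩
    have hunit : IsUnit (E.transpose).det := by
      rw [Matrix.det_transpose]; exact isUnit_iff_ne_zero.mpr hE
    -- apply biduality
    have hxG : x ∈ scaledGroup G D := by
      apply key_biduality D hD0 _ hDLz
      intro m hm
      set hvec : Fin N → ℚ := (E.transpose)⁻¹ *ᵥ (fun i => (m i : ℚ)) with hhv
      have hTh : E.transpose *ᵥ hvec = fun i => (m i : ℚ) := by
        rw [hhv, Matrix.mulVec_mulVec, Matrix.mul_nonsing_inv _ hunit, Matrix.one_mulVec]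
      have hmem : hvec ∈ TransposeGroup E G := by
        intro g hg
        obtain ⟨w, hw⟩ := hscale g hg
        have hwGz : w ∈ scaledGroup G D := by
          rw [mem_scaledGroup]
          have h : (fun i => (w i : ℚ) / (D : ℚ)) = g := by
            funext i; rw [hw i]; field_simp
          rw [h]; exact hg
        obtain ⟨k, hk⟩ := hm w hwGz
        refine ⟨k, ?_⟩
        rw [Matrix.dotProduct_mulVec, ← Matrix.mulVec_transpose, hTh]
        have h1 : (D : ℚ) * ((fun i => (m i : ℚ)) ⬝ᵥ g) = (D : ℚ) * (k : ℚ) := by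
          have h2 : (fun i => (m i : ℚ)) ⬝ᵥ ((D : ℚ) • g) = (D : ℚ) * ((fun i => (m i : ℚ)) ⬝ᵥ g) := by
            simp only [dotProduct, Pi.smul_apply, smul_eq_mul, Finset.mul_sum]
            exact Finset.sum_congr rfl fun i _ => by ring
          have h4 : ((D : ℚ) • g) = fun i => (w i : ℚ) := by
            funext i; rw [hw i]; rfl
          rw [← h2, h4, castv_dot, hk]
          push_cast
          ring
        exact mul_left_cancel₀ hDQ h1
      obtain ⟨k0, hk0⟩ := hRHS hvec hmem
      refine ⟨k0 + ∑ i, ⌊hvec i⌋, ?_⟩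
      have hsum : ∑ i, hvec i = ((k0 + ∑ i, ⌊hvec i⌋ : ℤ) : ℚ) := by
        push_cast
        rw [← hk0, ← Finset.sum_add_distrib]
        exact (Finset.sum_congr rfl fun i _ => by rw [Int.fract]; ring).symm
      have hcast : ((m ⬝ᵥ x : ℤ) : ℚ) = ((D * (k0 + ∑ i, ⌊hvec i⌋) : ℤ) : ℚ) := by
        rw [← castv_dot]
        have hx' : (fun i => (x i : ℚ)) = (D : ℚ) • q := by
          funext i; rw [hxq i]; rfl
        rw [hx']
        have h2 : (fun i => (m i : ℚ)) ⬝ᵥ ((D : ℚ) • q) = (D : ℚ) * ((fun i => (m i : ℚ)) ⬝ᵥ q) := by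
          simp only [dotProduct, Pi.smul_apply, smul_eq_mul, Finset.mul_sum]
          exact Finset.sum_congr rfl fun i _ => by ring
        rw [h2]
        have h5 : (fun i => (m i : ℚ)) ⬝ᵥ q = ∑ i, hvec i := by
          rw [← hTh, Matrix.mulVec_transpose, ← Matrix.dotProduct_mulVec, hq]
          simp [dotProduct]
        rw [h5, hsum]
        push_cast
        ring
      exact_mod_cast hcast
    rw [mem_scaledGroup] at hxG
    have h : (fun i => (x i : ℚ) / (D : ℚ)) = q := by
      funext i; rw [hxq i]; field_simp
    rwa [h] at hxG
end

section
/- Let W be an invertible polynomial with exponent matrix E, and let G_1 <= G_2 <= G_max,W be subgroups. Then the quotient G_2/G_1 is isomorphic to G_1^T/G_2^T. -/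
open Matrix Finset

noncomputable section

abbrev QZ : Type := ℚ ⧸ AddSubgroup.zmultiples (1 : ℚ)

def qzmk : ℚ →+ QZ := QuotientAddGroup.mk' _

lemma qzmk_eq_zero_iff (q : ℚ) : qzmk q = 0 ↔ ∃ m : ℤ, q = m := by
  rw [qzmk, QuotientAddGroup.mk'_apply, QuotientAddGroup.eq_zero_iff,
    AddSubgroup.mem_zmultiples_iff]
  constructor
  · rintro ⟨k, hk⟩; exact ⟨k, by simpa using hk.symm⟩
  · rintro ⟨m, hm⟩; exact ⟨m, by simp [hm]⟩

lemma qzmk_surjective : Function.Surjective qzmk :=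
  QuotientAddGroup.mk'_surjective _

lemma qz_zpow (q : ℚ) (m : ℤ) :
    (Multiplicative.ofAdd (qzmk q)) ^ m = Multiplicative.ofAdd (qzmk (m • q)) := by
  rw [map_zsmul qzmk]
  exact (ofAdd_zsmul _ _).symm

instance qz_hasEnough (n : ℕ) [NeZero n] : HasEnoughRootsOfUnity (Multiplicative QZ) n := by
  have hn : (n : ℚ) ≠ 0 := Nat.cast_ne_zero.mpr (NeZero.ne n)
  set ζ : Multiplicative QZ := Multiplicative.ofAdd (qzmk (1 / n)) with hζdef
  have hpow : ∀ m : ℤ, ζ ^ m = Multiplicative.ofAdd (qzmk (m / n)) := by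
    intro m
    rw [hζdef, qz_zpow]
    congr 1
    congr 1
    rw [zsmul_eq_mul]
    ring
  have hpown : ∀ m : ℕ, ζ ^ m = Multiplicative.ofAdd (qzmk (m / n)) := by
    intro m
    have := hpow (m : ℤ)
    rwa [zpow_natCast, Int.cast_natCast] at this
  have hprim : IsPrimitiveRoot ζ n := by
    constructor
    · rw [hpown n, div_self hn]
      have : qzmk (1 : ℚ) = 0 := (qzmk_eq_zero_iff 1).mpr ⟨1, by norm_num⟩
      simp [this]
    · intro l hl
      rw [hpown l] at hl
      have : qzmk ((l : ℚ) / n) = 0 := by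
        have := congrArg Multiplicative.toAdd hl
        simpa using this
      obtain ⟨m, hm⟩ := (qzmk_eq_zero_iff _).mp this
      have : (l : ℚ) = n * m := by
        field_simp at hm
        linarith [hm]
      have hint : (l : ℤ) = n * m := by exact_mod_cast this
      have : (n : ℤ) ∣ (l : ℤ) := ⟨m, hint⟩
      exact_mod_cast this
  refine ⟨⟨ζ, hprim⟩, ?_⟩
  -- cyclic
  set ζu : (Multiplicative QZ)ˣ := toUnits ζ with hζu
  have hζumem : ζu ∈ rootsOfUnity n (Multiplicative QZ) := by
    rw [mem_rootsOfUnity]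
    ext
    simp only [Units.val_pow_eq_pow_val, hζu, val_toUnits_apply, Units.val_one]
    exact hprim.pow_eq_one
  refine ⟨⟨⟨ζu, hζumem⟩, ?_⟩⟩
  rintro ⟨u, hu⟩
  rw [mem_rootsOfUnity] at hu
  -- u.val : Multiplicative QZ with (u.val)^n = 1
  obtain ⟨q, hq⟩ := qzmk_surjective (Multiplicative.toAdd u.val)
  have hun : (u : Multiplicative QZ) ^ n = 1 := by
    have := congrArg Units.val hu
    simpa using this
  have hval : Multiplicative.ofAdd (qzmk q) = (u : Multiplicative QZ) := by
    rw [hq, ofAdd_toAdd]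
  have h0 : qzmk ((n : ℚ) * q) = 0 := by
    rw [← hval] at hun
    have h2 := congrArg Multiplicative.toAdd hun
    rw [toAdd_pow, toAdd_ofAdd, toAdd_one, ← map_nsmul qzmk, nsmul_eq_mul] at h2
    exact h2
  obtain ⟨m, hm⟩ := (qzmk_eq_zero_iff _).mp h0
  have hq' : q = (m : ℚ) / n := by field_simp; linarith [hm]
  refine ⟨m, ?_⟩
  apply Subtype.ext
  apply Units.ext
  show ((toUnits ζ) ^ (m:ℤ)).val = u.val
  rw [← map_zpow, val_toUnits_apply, hpow m]
  rw [← hq', hq]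
  simp

/-- Self-duality of finite abelian groups against `ℚ/ℤ`. -/
theorem dual_equiv_self (A : Type) [AddCommGroup A] [Finite A] :
    Nonempty ((A →+ QZ) ≃+ A) := by
  haveI : NeZero (Monoid.exponent (Multiplicative A)) :=
    ⟨Monoid.exponent_ne_zero_of_finite⟩
  obtain ⟨e⟩ := CommGroup.monoidHom_mulEquiv_of_hasEnoughRootsOfUnity
    (Multiplicative A) (Multiplicative QZ)
  -- e : (Multiplicative A →* (Multiplicative QZ)ˣ) ≃* Multiplicative A
  let m₁ : Multiplicative (A →+ QZ) ≃* (Multiplicative A →* (Multiplicative QZ)ˣ) :=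
    { toFun := fun f =>
        ((toUnits : Multiplicative QZ ≃* (Multiplicative QZ)ˣ) :
          Multiplicative QZ →* (Multiplicative QZ)ˣ).comp
          (AddMonoidHom.toMultiplicative (Multiplicative.toAdd f))
      invFun := fun g => Multiplicative.ofAdd
        (AddMonoidHom.toMultiplicative.symm (((Units.coeHom (Multiplicative QZ))).comp g))
      left_inv := by
        intro f
        apply Multiplicative.toAdd.injective
        ext a
        simp
      right_inv := by
        intro g
        ext a
        simp
      map_mul' := by
        intro f g
        ext a
        simp }
  exact ⟨AddEquiv.toMultiplicative.symm (m₁.trans e)⟩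

open Matrix Finset

/-- The dual of a lattice w.r.t. the standard dot product. -/
def dualSub {N : ℕ} (L : AddSubgroup (Fin N → ℚ)) : AddSubgroup (Fin N → ℚ) where
  carrier := {h | ∀ x ∈ L, ∃ m : ℤ, h ⬝ᵥ x = (m : ℚ)}
  zero_mem' := fun x _ => ⟨0, by simp⟩
  add_mem' := by
    rintro a b ha hb x hx
    obtain ⟨m, hm⟩ := ha x hx
    obtain ⟨k, hk⟩ := hb x hx
    exact ⟨m + k, by simp [add_dotProduct, hm, hk]⟩
  neg_mem' := by
    rintro a ha x hx
    obtain ⟨m, hm⟩ := ha x hx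
    exact ⟨-m, by simp [neg_dotProduct, hm]⟩

lemma mem_dualSub {N : ℕ} {L : AddSubgroup (Fin N → ℚ)} {h : Fin N → ℚ} :
    h ∈ dualSub L ↔ ∀ x ∈ L, ∃ m : ℤ, h ⬝ᵥ x = (m : ℚ) := Iff.rfl

/-- Coercion `ℤ^N → ℚ^N` as a linear map. -/
def castHom (N : ℕ) : (Fin N → ℤ) →ₗ[ℤ] (Fin N → ℚ) where
  toFun z := fun i => (z i : ℚ)
  map_add' := by intro a b; funext i; push_cast; simp
  map_smul' := by intro c a; funext i; push_cast; simp

lemma castHom_injective (N : ℕ) : Function.Injective (castHom N) := by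
  intro a b h
  funext i
  have h2 : ((a i : ℚ)) = (b i : ℚ) := congrFun h i
  exact_mod_cast h2

theorem core_duality {N : ℕ} (E : Matrix (Fin N) (Fin N) ℚ) (hE : E.det ≠ 0)
    (L₁ L₂ : AddSubgroup (Fin N → ℚ)) (h12 : L₁ ≤ L₂)
    (hint : ∀ x ∈ L₂, IsIntVec x)
    (hEImg : ∀ z : Fin N → ℚ, IsIntVec z → E.mulVec z ∈ L₁) :
    Nonempty ((L₂ ⧸ L₁.addSubgroupOf L₂) ≃+
      ((dualSub L₁) ⧸ (dualSub L₂).addSubgroupOf (dualSub L₁))) := by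
  classical
  -- E has integer entries
  have hsingle : ∀ j : Fin N, IsIntVec (fun k : Fin N => if k = j then (1:ℚ) else 0) := by
    intro j k
    by_cases h : k = j
    · exact ⟨1, by simp [h]⟩
    · exact ⟨0, by simp [h]⟩
  have hcolL₁ : ∀ j : Fin N, E.mulVec (fun k => if k = j then (1:ℚ) else 0) ∈ L₁ :=
    fun j => hEImg _ (hsingle j)
  have hcol_eq : ∀ j, E.mulVec (fun k => if k = j then (1:ℚ) else 0) = fun i => E i j := by
    intro j
    funext i
    simp [Matrix.mulVec, dotProduct, mul_ite]
  have hEint : ∀ i j, ∃ m : ℤ, E i j = (m : ℚ) := by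
    intro i j
    have := hint _ (h12 (hcolL₁ j)) i
    rwa [hcol_eq j] at this
  choose E' hE' using fun i => hEint i
  have hEmap : E = (Matrix.of E').map (Int.cast : ℤ → ℚ) := by
    ext i j
    simp [Matrix.map_apply, hE' i j]
  set d : ℤ := (Matrix.of E').det with hd_def
  have hd : ((d : ℤ) : ℚ) = E.det := by
    rw [hEmap]
    have h1 := (Int.castRingHom ℚ).map_det (Matrix.of E')
    rw [RingHom.mapMatrix_apply] at h1
    exact h1
  have hd0 : d ≠ 0 := by
    intro h
    apply hE
    rw [← hd, h, Int.cast_zero]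
  -- integer matrix times integer vector is integral
  have hmulint : ∀ (A : Matrix (Fin N) (Fin N) ℤ) (x : Fin N → ℚ), IsIntVec x →
      IsIntVec ((A.map (Int.cast : ℤ → ℚ)).mulVec x) := by
    intro A x hx
    choose m hm using hx
    intro i
    refine ⟨∑ j, A i j * m j, ?_⟩
    simp only [Matrix.mulVec, dotProduct, Matrix.map_apply]
    push_cast
    exact Finset.sum_congr rfl fun j _ => by rw [hm j]
  -- torsion bound
  have htor : ∀ x ∈ L₂, d • x ∈ L₁ := by
    intro x hx
    have hadj : IsIntVec ((E.adjugate).mulVec x) := by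
      have hadjmap : E.adjugate = ((Matrix.of E').adjugate).map (Int.cast : ℤ → ℚ) := by
        rw [hEmap]
        exact ((Int.castRingHom ℚ).map_adjugate (Matrix.of E')).symm
      rw [hadjmap]
      exact hmulint _ _ (hint x hx)
    have key : E.mulVec ((E.adjugate).mulVec x) = d • x := by
      rw [Matrix.mulVec_mulVec, Matrix.mul_adjugate, Matrix.smul_mulVec,
        Matrix.one_mulVec, ← hd, Int.cast_smul_eq_zsmul]
    rw [← key]
    exact hEImg _ hadj
  -- basis of L₂
  set Z₂ : Submodule ℤ (Fin N → ℤ) :=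
    (AddSubgroup.toIntSubmodule L₂).comap (castHom N) with hZ₂
  obtain ⟨n, b⟩ := Submodule.basisOfPid (Pi.basisFun ℤ (Fin N)) Z₂
  set v : Fin n → (Fin N → ℚ) := fun i => castHom N ((b i : Fin N → ℤ)) with hv
  have hvL : ∀ i, v i ∈ L₂ := fun i => (b i).2
  have hrep : ∀ x ∈ L₂, ∃ cc : Fin n → ℤ, x = ∑ i, cc i • v i := by
    intro x hx
    choose m hm using hint x hx
    have hcast : castHom N m = x := by
      funext i
      exact (hm i).symm
    have hmem : m ∈ Z₂ := by
      show castHom N m ∈ AddSubgroup.toIntSubmodule L₂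
      rw [hcast]
      exact hx
    refine ⟨fun i => b.repr ⟨m, hmem⟩ i, ?_⟩
    have hsum := b.sum_repr ⟨m, hmem⟩
    have := congrArg (fun z : Z₂ => castHom N (z : Fin N → ℤ)) hsum
    simp only at this
    rw [← hcast, ← this]
    rw [Submodule.coe_sum]
    rw [map_sum]
    refine Finset.sum_congr rfl fun i _ => ?_
    rw [SetLike.val_smul, map_zsmul]
  have hliZ : LinearIndependent ℤ v := by
    have h1 := b.linearIndependent
    have h2 := h1.map' Z₂.subtype (Submodule.ker_subtype Z₂)
    have h3 := h2.map' (castHom N) (LinearMap.ker_eq_bot.mpr (castHom_injective N))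
    exact h3
  have hliQ : LinearIndependent ℚ v := (LinearIndependent.iff_fractionRing ℤ ℚ).mp hliZ
  have hL2span : ∀ x ∈ L₂, x ∈ Submodule.span ℚ (Set.range v) := by
    intro x hx
    obtain ⟨cc, rfl⟩ := hrep x hx
    refine Submodule.sum_mem _ fun i _ => ?_
    rw [← Int.cast_smul_eq_zsmul ℚ]
    exact Submodule.smul_mem _ _ (Submodule.subset_span ⟨i, rfl⟩)
  have hspan : ⊤ ≤ Submodule.span ℚ (Set.range v) := by
    intro y _
    have hinv : E * E⁻¹ = 1 := Matrix.mul_nonsing_inv E (isUnit_iff_ne_zero.mpr hE)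
    have hy : y = E.mulVec (E⁻¹.mulVec y) := by
      rw [Matrix.mulVec_mulVec, hinv, Matrix.one_mulVec]
    have hexp : E.mulVec (E⁻¹.mulVec y)
        = ∑ j, (E⁻¹.mulVec y) j • E.mulVec (fun k => if k = j then 1 else 0) := by
      funext i
      simp only [Finset.sum_apply, Pi.smul_apply, hcol_eq, smul_eq_mul]
      simp [Matrix.mulVec, dotProduct, mul_comm]
    rw [hy, hexp]
    exact Submodule.sum_mem _ fun j _ =>
      Submodule.smul_mem _ _ (hL2span _ (h12 (hcolL₁ j)))
  set B : Module.Basis (Fin n) ℚ (Fin N → ℚ) := Module.Basis.mk hliQ hspan with hB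
  have hBv : ∀ i, B i = v i := fun i => Module.Basis.mk_apply hliQ hspan i
  -- finiteness of the quotient
  haveI hfin : Finite (L₂ ⧸ L₁.addSubgroupOf L₂) := by
    haveI : AddGroup.FG ↥L₂ := by
      rw [AddGroup.fg_iff]
      refine ⟨Set.range (fun i : Fin n => (⟨v i, hvL i⟩ : ↥L₂)), ?_, Set.finite_range _⟩
      rw [eq_top_iff]
      rintro ⟨x, hx⟩ -
      obtain ⟨cc, hcc⟩ := hrep x hx
      have hxeq : (⟨x, hx⟩ : ↥L₂) = ∑ i, cc i • (⟨v i, hvL i⟩ : ↥L₂) := by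
        apply Subtype.ext
        push_cast
        exact hcc
      rw [hxeq]
      refine AddSubgroup.sum_mem _ fun i _ => AddSubgroup.zsmul_mem _ ?_ _
      exact AddSubgroup.subset_closure (Set.mem_range_self i)
    haveI : AddGroup.FG (L₂ ⧸ L₁.addSubgroupOf L₂) :=
      AddGroup.fg_of_surjective (f := QuotientAddGroup.mk' (L₁.addSubgroupOf L₂))
        (QuotientAddGroup.mk'_surjective _)
    apply AddCommGroup.finite_of_fg_torsion
    intro y
    induction y using QuotientAddGroup.induction_on with
    | H x =>
      rw [isOfFinAddOrder_iff_nsmul_eq_zero]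
      refine ⟨d.natAbs, Int.natAbs_pos.mpr hd0, ?_⟩
      have h1 : (d.natAbs : ℤ) • (x : Fin N → ℚ) ∈ L₁ := by
        rcases Int.natAbs_eq d with h | h
        · rw [← h]
          exact htor _ x.2
        · have h2 : (d.natAbs : ℤ) = -d := by omega
          rw [h2, neg_zsmul]
          exact L₁.neg_mem (htor _ x.2)
      rw [natCast_zsmul] at h1
      show d.natAbs • ((QuotientAddGroup.mk' (L₁.addSubgroupOf L₂)) x) = 0
      rw [← map_nsmul, QuotientAddGroup.mk'_apply, QuotientAddGroup.eq_zero_iff]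
      refine AddSubgroup.mem_addSubgroupOf.mpr ?_
      show ((d.natAbs • x : ↥L₂) : Fin N → ℚ) ∈ L₁
      have h3 : ((d.natAbs • x : ↥L₂) : Fin N → ℚ) = d.natAbs • (x : Fin N → ℚ) := rfl
      rw [h3]
      exact h1
  -- the pairing homomorphism
  have hvanish : ∀ h : ↥(dualSub L₁), ∀ x ∈ L₁.addSubgroupOf L₂,
      qzmk ((h : Fin N → ℚ) ⬝ᵥ (x : ↥L₂) : ℚ) = 0 := by
    intro h x hx
    exact (qzmk_eq_zero_iff _).mpr (h.2 _ (AddSubgroup.mem_addSubgroupOf.mp hx))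
  let inner : ↥(dualSub L₁) → (↥L₂ →+ QZ) := fun h =>
    { toFun := fun x => qzmk ((h : Fin N → ℚ) ⬝ᵥ (x : Fin N → ℚ))
      map_zero' := by simp
      map_add' := by
        intro a b
        push_cast
        rw [dotProduct_add, map_add] }
  have hinner : ∀ (h : ↥(dualSub L₁)) (x : ↥L₂),
      inner h x = qzmk ((h : Fin N → ℚ) ⬝ᵥ (x : Fin N → ℚ)) := fun _ _ => rfl
  let P : ↥(dualSub L₁) →+ ((L₂ ⧸ L₁.addSubgroupOf L₂) →+ QZ) :=
    { toFun := fun h => QuotientAddGroup.lift _ (inner h) (hvanish h)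
      map_zero' := by
        ext x
        show qzmk (((0 : ↥(dualSub L₁)) : Fin N → ℚ) ⬝ᵥ (x : Fin N → ℚ)) = 0
        simp [hinner, zero_dotProduct]
      map_add' := by
        intro a b
        ext x
        show qzmk (((a + b : ↥(dualSub L₁)) : Fin N → ℚ) ⬝ᵥ (x : Fin N → ℚ)) =
          qzmk ((a : Fin N → ℚ) ⬝ᵥ (x : Fin N → ℚ)) + qzmk ((b : Fin N → ℚ) ⬝ᵥ (x : Fin N → ℚ))
        simp [hinner, add_dotProduct, map_add] }
  have hPapp : ∀ (h : ↥(dualSub L₁)) (x : ↥L₂),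
      P h (QuotientAddGroup.mk x) = qzmk ((h : Fin N → ℚ) ⬝ᵥ (x : Fin N → ℚ)) :=
    fun h x => rfl
  have hker : P.ker = (dualSub L₂).addSubgroupOf (dualSub L₁) := by
    ext h
    rw [AddMonoidHom.mem_ker, AddSubgroup.mem_addSubgroupOf]
    constructor
    · intro h0 x hx
      have h4 := congrArg
        (fun φ : (L₂ ⧸ L₁.addSubgroupOf L₂) →+ QZ =>
          φ (QuotientAddGroup.mk (⟨x, hx⟩ : ↥L₂))) h0
      simp only [AddMonoidHom.zero_apply] at h4
      rw [hPapp] at h4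
      exact (qzmk_eq_zero_iff _).mp h4
    · intro hmem
      ext x
      show P h (QuotientAddGroup.mk x) = 0
      rw [hPapp]
      exact (qzmk_eq_zero_iff _).mpr (hmem _ x.2)
  have hsurj : Function.Surjective P := by
    intro χ
    choose qi hqi using fun i : Fin n =>
      qzmk_surjective (χ (QuotientAddGroup.mk (⟨v i, hvL i⟩ : ↥L₂)))
    set H : (Fin N → ℚ) →ₗ[ℚ] ℚ := B.constr ℚ qi with hH
    set hvec : Fin N → ℚ := fun i => H (fun j => if i = j then 1 else 0) with hhvec
    have hHdot : ∀ x : Fin N → ℚ, hvec ⬝ᵥ x = H x := by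
      intro x
      rw [LinearMap.pi_apply_eq_sum_univ H x]
      simp only [dotProduct, hhvec, smul_eq_mul]
      exact Finset.sum_congr rfl fun i _ => mul_comm _ _
    have hHv : ∀ i, H (v i) = qi i := by
      intro i
      have h5 := B.constr_basis ℚ qi i
      rwa [hBv] at h5
    have hkey : ∀ (x : Fin N → ℚ) (hx : x ∈ L₂),
        qzmk (H x) = χ (QuotientAddGroup.mk (⟨x, hx⟩ : ↥L₂)) := by
      intro x hx
      obtain ⟨cc, hcc⟩ := hrep x hx
      have hsub : (⟨x, hx⟩ : ↥L₂) = ∑ i, cc i • (⟨v i, hvL i⟩ : ↥L₂) := by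
        apply Subtype.ext
        push_cast
        exact hcc
      have hHx : H x = ∑ i, cc i • qi i := by
        rw [hcc, map_sum]
        exact Finset.sum_congr rfl fun i _ => by rw [map_zsmul, hHv]
      rw [hHx, hsub]
      calc qzmk (∑ i, cc i • qi i) = ∑ i, cc i • qzmk (qi i) := by
            rw [map_sum]
            exact Finset.sum_congr rfl fun i _ => map_zsmul qzmk _ _
        _ = ∑ i, cc i • χ (QuotientAddGroup.mk (⟨v i, hvL i⟩ : ↥L₂)) :=
            Finset.sum_congr rfl fun i _ => by rw [hqi]
        _ = χ (QuotientAddGroup.mk (∑ i, cc i • (⟨v i, hvL i⟩ : ↥L₂))) := by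
            simp [map_sum, map_zsmul]
    have hhd : hvec ∈ dualSub L₁ := by
      intro x hx
      have h0 : (QuotientAddGroup.mk (⟨x, h12 hx⟩ : ↥L₂) : L₂ ⧸ L₁.addSubgroupOf L₂) = 0 := by
        rw [QuotientAddGroup.eq_zero_iff]
        exact AddSubgroup.mem_addSubgroupOf.mpr hx
      have hk := hkey x (h12 hx)
      rw [h0, map_zero] at hk
      refine (qzmk_eq_zero_iff _).mp ?_
      rw [hHdot]
      exact hk
    refine ⟨⟨hvec, hhd⟩, ?_⟩
    ext x
    show P ⟨hvec, hhd⟩ (QuotientAddGroup.mk x) = χ (QuotientAddGroup.mk x)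
    rw [hPapp, hHdot]
    have h6 := hkey x x.2
    simpa using h6
  -- assemble
  obtain ⟨dEq⟩ := dual_equiv_self (L₂ ⧸ L₁.addSubgroupOf L₂)
  have e2 : ((dualSub L₁) ⧸ (dualSub L₂).addSubgroupOf (dualSub L₁)) ≃+
      ((L₂ ⧸ L₁.addSubgroupOf L₂) →+ QZ) := by
    rw [← hker]
    exact QuotientAddGroup.quotientKerEquivOfSurjective P hsurj
  exact ⟨dEq.symm.trans e2.symm⟩

/-- For subgroups `G₁ ≤ G₂ ≤ G_max,W`, the quotient `G₂/G₁` is isomorphic to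
`G₁^T/G₂^T`. -/
theorem quotient_iso_transpose_quotient {N : ℕ} (E : Matrix (Fin N) (Fin N) ℚ)
    (hE : E.det ≠ 0) (G₁ G₂ : AddSubgroup (Fin N → ℚ))
    (hl : intLattice N ≤ G₁) (h12 : G₁ ≤ G₂) (hmax : G₂ ≤ GmaxGroup E) :
    Nonempty ((G₂ ⧸ G₁.addSubgroupOf G₂) ≃+
      ((TransposeGroup E G₁) ⧸ (TransposeGroup E G₂).addSubgroupOf (TransposeGroup E G₁))) := by
  classical
  have hu : IsUnit E.det := isUnit_iff_ne_zero.mpr hE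
  let f : (Fin N → ℚ) →+ (Fin N → ℚ) := (Matrix.mulVecLin E).toAddMonoidHom
  let g : (Fin N → ℚ) →+ (Fin N → ℚ) := (Matrix.mulVecLin E⁻¹).toAddMonoidHom
  have hgf : ∀ x, g (f x) = x := by
    intro x
    show E⁻¹.mulVec (E.mulVec x) = x
    rw [Matrix.mulVec_mulVec, Matrix.nonsing_inv_mul E hu, Matrix.one_mulVec]
  have hfg : ∀ x, f (g x) = x := by
    intro x
    show E.mulVec (E⁻¹.mulVec x) = x
    rw [Matrix.mulVec_mulVec, Matrix.mul_nonsing_inv E hu, Matrix.one_mulVec]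
  let e2 : (Fin N → ℚ) ≃+ (Fin N → ℚ) :=
    { toFun := f
      invFun := g
      left_inv := hgf
      right_inv := hfg
      map_add' := f.map_add }
  have htrans : ∀ G : AddSubgroup (Fin N → ℚ),
      TransposeGroup E G = dualSub (G.map (e2 : (Fin N → ℚ) →+ (Fin N → ℚ))) := by
    intro G
    ext h
    constructor
    · intro hh x hx
      rw [AddSubgroup.mem_map] at hx
      obtain ⟨gg, hgg, rfl⟩ := hx
      exact hh gg hgg
    · intro hh gg hgg
      exact hh _ (AddSubgroup.mem_map.mpr ⟨gg, hgg, rfl⟩)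
  have h12L : G₁.map (e2 : (Fin N → ℚ) →+ (Fin N → ℚ)) ≤
      G₂.map (e2 : (Fin N → ℚ) →+ (Fin N → ℚ)) := AddSubgroup.map_mono h12
  have hintL : ∀ x ∈ G₂.map (e2 : (Fin N → ℚ) →+ (Fin N → ℚ)), IsIntVec x := by
    intro x hx
    obtain ⟨gg, hgg, rfl⟩ := AddSubgroup.mem_map.mp hx
    exact hmax hgg
  have hEImgL : ∀ z : Fin N → ℚ, IsIntVec z →
      E.mulVec z ∈ G₁.map (e2 : (Fin N → ℚ) →+ (Fin N → ℚ)) := by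
    intro z hz
    exact AddSubgroup.mem_map.mpr ⟨z, hl hz, rfl⟩
  let esub : ↥G₂ ≃+ ↥(G₂.map (e2 : (Fin N → ℚ) →+ (Fin N → ℚ))) := e2.addSubgroupMap G₂
  have hmapeq : (G₁.addSubgroupOf G₂).map
      (esub : ↥G₂ →+ ↥(G₂.map (e2 : (Fin N → ℚ) →+ (Fin N → ℚ)))) =
      (G₁.map (e2 : (Fin N → ℚ) →+ (Fin N → ℚ))).addSubgroupOf
        (G₂.map (e2 : (Fin N → ℚ) →+ (Fin N → ℚ))) := by
    ext x
    rw [AddSubgroup.mem_map, AddSubgroup.mem_addSubgroupOf]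
    constructor
    · rintro ⟨gg, hgg, rfl⟩
      rw [AddSubgroup.mem_addSubgroupOf] at hgg
      exact AddSubgroup.mem_map.mpr ⟨gg, hgg, rfl⟩
    · intro hx
      obtain ⟨gg, hgg, heq⟩ := AddSubgroup.mem_map.mp hx
      refine ⟨⟨gg, h12 hgg⟩, ?_, ?_⟩
      · rw [AddSubgroup.mem_addSubgroupOf]
        exact hgg
      · exact Subtype.ext heq
  have eq1 := QuotientAddGroup.congr (G₁.addSubgroupOf G₂)
    ((G₁.map (e2 : (Fin N → ℚ) →+ (Fin N → ℚ))).addSubgroupOf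
      (G₂.map (e2 : (Fin N → ℚ) →+ (Fin N → ℚ)))) esub hmapeq
  rw [htrans G₁, htrans G₂]
  obtain ⟨ecore⟩ := core_duality E hE _ _ h12L hintL hEImgL
  exact ⟨eq1.trans ecore⟩
end
end

section
/- Let W be an invertible polynomial with invertible exponent matrix E. The double transpose recovers the original group: for any subgroup G of G_max,W, (G^T)^T = G. -/
open Matrix Finset

lemma int_iff_mk_zero (q : ℚ) : (∃ m : ℤ, q = (m : ℚ)) ↔ (q : AddCircle (1:ℚ)) = 0 := by
  rw [show ((0:AddCircle (1:ℚ))) = ((0:ℚ) : AddCircle (1:ℚ)) by simp,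
    QuotientAddGroup.eq_iff_sub_mem]
  constructor
  · rintro ⟨m, rfl⟩
    exact ⟨m, by simp⟩
  · rintro ⟨m, hm⟩
    exact ⟨m, by simpa using hm.symm⟩

lemma dot_symm {N : ℕ} (E : Matrix (Fin N) (Fin N) ℚ) (g h : Fin N → ℚ) :
    g ⬝ᵥ Eᵀ.mulVec h = h ⬝ᵥ E.mulVec g := by
  rw [Matrix.mulVec_transpose, Matrix.dotProduct_mulVec, dotProduct_comm]

lemma mk_dot {N : ℕ} (φ : (Fin N → ℚ) →+ AddCircle (1:ℚ)) (q y : Fin N → ℚ)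
    (hq : ∀ j, ((q j : ℚ) : AddCircle (1:ℚ)) = φ (Pi.single j 1))
    (m : Fin N → ℤ) (hy : ∀ j, y j = (m j : ℚ)) :
    ((q ⬝ᵥ y : ℚ) : AddCircle (1:ℚ)) = φ y := by
  have hy' : y = ∑ j, (m j) • Pi.single j (1:ℚ) := by
    funext i
    simp [Finset.sum_apply, Pi.single_apply, hy, Finset.sum_ite_eq]
  have hdot : q ⬝ᵥ y = ∑ j, (m j) • q j := by
    simp [dotProduct, hy, mul_comm]
  rw [hdot, hy', map_sum]
  rw [show ((∑ j, (m j) • q j : ℚ) : AddCircle (1:ℚ))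
      = (QuotientAddGroup.mk' (AddSubgroup.zmultiples (1:ℚ))) (∑ j, (m j) • q j) from rfl,
    map_sum]
  refine Finset.sum_congr rfl fun j _ => ?_
  rw [map_zsmul, map_zsmul]
  congr 1
  exact hq j


/-- The double BHHK transpose recovers the original group: `(G^T)^T = G`, where the
second transpose is taken with respect to the exponent matrix `Eᵀ` of `Wᵀ`. -/
theorem double_transpose {N : ℕ} (E : Matrix (Fin N) (Fin N) ℚ) (hE : E.det ≠ 0)
    (G : AddSubgroup (Fin N → ℚ))
    (hl : intLattice N ≤ G) (hmax : G ≤ GmaxGroup E) :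
    TransposeGroup Eᵀ (TransposeGroup E G) = G := by
  ext g
  constructor
  · intro hg
    by_contra hgG
    have hx : ∀ i, ∃ m : ℤ, (E.mulVec g) i = (m : ℚ) := by
      intro i
      have hsingle : (Pi.single i (1:ℚ)) ∈ TransposeGroup E G := by
        intro g' hg'
        obtain ⟨m, hm⟩ := hmax hg' i
        exact ⟨m, by rw [← hm]; simp [dotProduct, Pi.single_apply]⟩
      obtain ⟨m, hm⟩ := hg _ hsingle
      refine ⟨m, ?_⟩
      rw [← hm, dot_symm]
      simp [dotProduct, Pi.single_apply]
    choose m hm using hx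
    set L : AddSubgroup (Fin N → ℚ) :=
      G.map (Matrix.mulVecLin E).toAddMonoidHom with hL
    have hxL : E.mulVec g ∉ L := by
      rintro hmem
      obtain ⟨g', hg', hEg⟩ := hmem
      apply hgG
      have hEg' : E.mulVec g' = E.mulVec g := hEg
      have : g' = g := by
        have h1 := congrArg (fun v => E⁻¹.mulVec v) hEg'
        simpa [Matrix.mulVec_mulVec, Matrix.nonsing_inv_mul E (isUnit_iff_ne_zero.mpr hE),
          Matrix.one_mulVec] using h1
      exact this ▸ hg'
    have hxQ : (QuotientAddGroup.mk (E.mulVec g) : (Fin N → ℚ) ⧸ L) ≠ 0 := by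
      simpa [QuotientAddGroup.eq_zero_iff] using hxL
    obtain ⟨c, hc⟩ := CharacterModule.exists_character_apply_ne_zero_of_ne_zero hxQ
    set φ : (Fin N → ℚ) →+ AddCircle (1:ℚ) :=
      AddMonoidHom.comp (show ((Fin N → ℚ) ⧸ L) →+ AddCircle (1:ℚ) from c)
        (QuotientAddGroup.mk' L) with hφ
    have hqex : ∀ j, ∃ r : ℚ, (r : AddCircle (1:ℚ)) = φ (Pi.single j 1) := fun j =>
      QuotientAddGroup.mk_surjective _
    choose q hq using hqex
    have hqT : q ∈ TransposeGroup E G := by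
      intro g' hg'
      choose m' hm' using fun i => hmax hg' i
      rw [int_iff_mk_zero, mk_dot φ q (E.mulVec g') hq m' hm']
      have hmem : E.mulVec g' ∈ L := ⟨g', hg', rfl⟩
      show c ((QuotientAddGroup.mk' L) (E.mulVec g')) = 0
      rw [QuotientAddGroup.mk'_apply, (QuotientAddGroup.eq_zero_iff _).mpr hmem, map_zero]
    obtain ⟨k, hk⟩ := hg q hqT
    rw [dot_symm] at hk
    have h0 : ((q ⬝ᵥ E.mulVec g : ℚ) : AddCircle (1:ℚ)) = 0 := (int_iff_mk_zero _).mp ⟨k, hk⟩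
    rw [mk_dot φ q _ hq m hm] at h0
    exact hc h0
  · intro hg h hh
    obtain ⟨k, hk⟩ := hh g hg
    exact ⟨k, by rw [dot_symm]; exact hk⟩
end
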